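/- Let H = D₈ × C₂^(m-3) where D₈ = ⟨a,b | a⁴ = b² = (ab)² = 1⟩ and the C₂ factors are generated by involutions c₁,…,c_{m-3}, with m ≥ 4. Then the map x defined on generators by a ↦ a⁻¹, b ↦ ab, c_{2i+1} ↦ c_{2i+1}, c_{2i+2} ↦ a²c_{2i+1}c_{2i+2} (for 0 ≤ i ≤ ⌊(m-5)/2⌋), and additionally c_{m-3} ↦ a²c_{m-3} if m is even, extends to an automorphism of H of order 2. -/

import Mathlib

/-- `H = D₈ × C₂^(m-3)`, the direct product of the dihedral group of order 8
(`DihedralGroup 4` in Mathlib) and an elementary abelian 2-group of rank `m - 3`. -/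
abbrev Hgrp (m : ℕ) := DihedralGroup 4 × Multiplicative (Fin (m - 3) → ZMod 2)

/-- The element `a`, of order 4. -/
def aElt (m : ℕ) : Hgrp m := (DihedralGroup.r 1, 1)

/-- The involution `b`, with `b * a * b = a⁻¹`. -/
def bElt (m : ℕ) : Hgrp m := (DihedralGroup.sr 0, 1)

/-- The involution `c j` for `1 ≤ j ≤ m - 3`; by convention `c j = 1` for `j = 0`
(covering `c₋₁ = c₀ = 1`) and for `j > m - 3`. -/
def cElt (m j : ℕ) : Hgrp m :=
  (1, Multiplicative.ofAdd (fun i : Fin (m - 3) => if (i : ℕ) + 1 = j then 1 else 0))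


open DihedralGroup

section Aux

/-- automorphism of D8 on components -/
private def psiFun : DihedralGroup 4 → DihedralGroup 4
  | r i => r (-i)
  | sr i => sr (-1 - i)

private def psi : DihedralGroup 4 →* DihedralGroup 4 where
  toFun := psiFun
  map_one' := by show psiFun (r 0) = r 0; simp [psiFun]
  map_mul' := by
    rintro (i | i) (j | j) <;>
      simp only [r_mul_r, r_mul_sr, sr_mul_r, sr_mul_sr, psiFun] <;> congr 1 <;> ring

private lemma psi_psi (d : DihedralGroup 4) : psi (psi d) = d := by
  rcases d with i | i <;> simp only [psi, MonoidHom.coe_mk, OneHom.coe_mk, psiFun] <;>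
    congr 1 <;> ring

private def mu (n k : ℕ) : ZMod 2 :=
  if k % 2 = 1 ∨ (k + 1 = n ∧ n % 2 = 1) then 1 else 0

private def sig (n : ℕ) (v : Fin n → ZMod 2) : ZMod 2 := ∑ k : Fin n, mu n k * v k

private lemma sig_add (n : ℕ) (v w : Fin n → ZMod 2) :
    sig n (v + w) = sig n v + sig n w := by
  simp [sig, mul_add, Finset.sum_add_distrib]

private def Tm (n : ℕ) (v : Fin n → ZMod 2) : Fin n → ZMod 2 := fun j =>
  v j + if h : (j : ℕ) % 2 = 0 ∧ (j : ℕ) + 1 < n then v ⟨(j : ℕ) + 1, h.2⟩ else 0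

private lemma Tm_add (n : ℕ) (v w : Fin n → ZMod 2) :
    Tm n (v + w) = Tm n v + Tm n w := by
  funext j
  simp only [Tm, Pi.add_apply]
  split <;> ring

private lemma zmod2_add_self (a : ZMod 2) : a + a = 0 := by revert a; decide

private lemma Tm_Tm (n : ℕ) (v : Fin n → ZMod 2) : Tm n (Tm n v) = v := by
  funext j
  simp only [Tm]
  by_cases h : (j : ℕ) % 2 = 0 ∧ (j : ℕ) + 1 < n
  · rw [dif_pos h, dif_pos h, dif_neg (by omega)]
    have := zmod2_add_self (v ⟨(j : ℕ) + 1, h.2⟩)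
    rw [add_zero]
    linear_combination this
  · rw [dif_neg h, dif_neg h]
    rw [add_zero, add_zero]

private lemma sig_Tm (n : ℕ) (v : Fin n → ZMod 2) : sig n (Tm n v) = sig n v := by
  simp only [sig, Tm, mul_add, Finset.sum_add_distrib]
  have : ∀ k : Fin n,
      mu n k * (if h : (k : ℕ) % 2 = 0 ∧ (k : ℕ) + 1 < n then v ⟨(k : ℕ) + 1, h.2⟩ else 0) = 0 := by
    intro k
    by_cases h : (k : ℕ) % 2 = 0 ∧ (k : ℕ) + 1 < n
    · rw [dif_pos h]
      have hmu : mu n (k : ℕ) = 0 := by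
        unfold mu
        rw [if_neg]
        omega
      rw [hmu, zero_mul]
    · rw [dif_neg h, mul_zero]
  rw [Finset.sum_congr rfl fun k _ => this k, Finset.sum_const_zero, add_zero]

private def twist (n : ℕ) (v : Fin n → ZMod 2) : DihedralGroup 4 :=
  r ((2 * (sig n v).val : ℕ) : ZMod 4)

private lemma twist_comm (d : DihedralGroup 4) (n : ℕ) (v : Fin n → ZMod 2) :
    d * twist n v = twist n v * d := by
  unfold twist
  have key : ∀ (s : ZMod 2) (d : DihedralGroup 4),
      d * r ((2 * s.val : ℕ) : ZMod 4) = r ((2 * s.val : ℕ) : ZMod 4) * d := by decide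
  exact key _ d

private lemma twist_add (n : ℕ) (v w : Fin n → ZMod 2) :
    twist n (v + w) = twist n v * twist n w := by
  unfold twist
  rw [sig_add, r_mul_r]
  congr 1
  have key : ∀ s t : ZMod 2,
      (((2 * (s + t).val : ℕ) : ZMod 4)) = ((2 * s.val : ℕ) : ZMod 4) + ((2 * t.val : ℕ) : ZMod 4) := by
    decide
  exact key _ _

private lemma sig_c (n j : ℕ) (hj1 : 1 ≤ j) (hj : j ≤ n) :
    sig n (fun i : Fin n => if (i : ℕ) + 1 = j then 1 else 0) = mu n (j - 1) := by
  unfold sig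
  rw [Finset.sum_eq_single (⟨j - 1, by omega⟩ : Fin n)]
  · have hh : ((⟨j - 1, by omega⟩ : Fin n) : ℕ) + 1 = j := by simp; omega
    simp [hh]
  · intro b _ hb
    have : ¬ ((b : ℕ) + 1 = j) := fun h => hb (Fin.ext (by simp; omega))
    simp [this]
  · intro h; exact absurd (Finset.mem_univ _) h

private lemma Tm_c_odd (n j : ℕ) (hj : j % 2 = 1) :
    Tm n (fun i : Fin n => if (i : ℕ) + 1 = j then 1 else 0) =
      fun i : Fin n => if (i : ℕ) + 1 = j then 1 else 0 := by
  funext k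
  simp only [Tm]
  split_ifs with h1 h2 h3 <;> first | rfl | decide | omega | (exfalso; omega) | simp

private lemma Tm_c_even (n j : ℕ) (hj : j % 2 = 0) (hj2 : 2 ≤ j) (hjn : j ≤ n) :
    Tm n (fun i : Fin n => if (i : ℕ) + 1 = j then 1 else 0) =
      (fun i : Fin n => if (i : ℕ) + 1 = j - 1 then 1 else 0) +
      fun i : Fin n => if (i : ℕ) + 1 = j then 1 else 0 := by
  funext k
  simp only [Tm, Pi.add_apply]
  split_ifs <;> first | rfl | decide | omega | (exfalso; omega) | simp

private def xFun (m : ℕ) : Hgrp m → Hgrp m := fun z =>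
  (psi z.1 * twist (m - 3) (Multiplicative.toAdd z.2),
    Multiplicative.ofAdd (Tm (m - 3) (Multiplicative.toAdd z.2)))

private lemma psi_r (i : ZMod 4) : psi (r i) = r (-i) := rfl

private lemma psi_twist (n : ℕ) (v : Fin n → ZMod 2) :
    psi (twist n v) * twist n v = 1 := by
  unfold twist
  rw [psi_r, r_mul_r, neg_add_cancel, one_def]

private lemma xInvol (m : ℕ) (z : Hgrp m) : xFun m (xFun m z) = z := by
  unfold xFun
  have h1 : twist (m - 3) (Tm (m - 3) (Multiplicative.toAdd z.2))
      = twist (m - 3) (Multiplicative.toAdd z.2) := by unfold twist; rw [sig_Tm]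
  simp only [toAdd_ofAdd, map_mul, psi_psi, h1, Tm_Tm, ofAdd_toAdd, mul_assoc, psi_twist,
    mul_one]

private lemma xFun_mul (m : ℕ) (z w : Hgrp m) :
    xFun m (z * w) = xFun m z * xFun m w := by
  unfold xFun
  refine Prod.ext ?_ ?_
  · simp only [Prod.fst_mul, Prod.snd_mul, toAdd_mul, map_mul, twist_add]
    have hc : ∀ (p q r' s : DihedralGroup 4), q * r' = r' * q →
        p * q * (r' * s) = p * r' * (q * s) := by
      intro p q r' s h
      rw [mul_assoc, ← mul_assoc q, h, mul_assoc, ← mul_assoc]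
    exact hc _ _ _ _ (twist_comm _ _ _)
  · simp only [Prod.snd_mul, toAdd_mul, Tm_add, ofAdd_add]

private def xAut (m : ℕ) : MulAut (Hgrp m) :=
  { toFun := xFun m
    invFun := xFun m
    left_inv := xInvol m
    right_inv := xInvol m
    map_mul' := xFun_mul m }

private lemma xAut_apply (m : ℕ) (z : Hgrp m) : xAut m z = xFun m z := rfl

private lemma toAdd_one' (n : ℕ) :
    Multiplicative.toAdd (1 : Multiplicative (Fin n → ZMod 2)) = 0 := rfl

private lemma sig_zero (n : ℕ) : sig n (0 : Fin n → ZMod 2) = 0 := by simp [sig]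

private lemma twist_zero (n : ℕ) : twist n (0 : Fin n → ZMod 2) = 1 := by
  unfold twist
  rw [sig_zero]
  simp

private lemma Tm_zero (n : ℕ) : Tm n (0 : Fin n → ZMod 2) = 0 := by
  funext k
  simp only [Tm, Pi.zero_apply]
  split_ifs <;> simp

private lemma x_c (m j : ℕ) (hj1 : 1 ≤ j) (hj : j ≤ m - 3) :
    xAut m (cElt m j) =
      (DihedralGroup.r ((2 * (mu (m - 3) (j - 1)).val : ℕ) : ZMod 4),
        Multiplicative.ofAdd
          (Tm (m - 3) (fun i : Fin (m - 3) => if (i : ℕ) + 1 = j then 1 else 0))) := by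
  rw [xAut_apply]
  unfold xFun cElt
  refine Prod.ext ?_ rfl
  show psi 1 * twist (m - 3) (fun i : Fin (m - 3) => if (i : ℕ) + 1 = j then 1 else 0) = _
  rw [map_one, one_mul]
  unfold twist
  rw [sig_c _ _ hj1 hj]


end Aux

/-- The map defined on the generators by `a ↦ a⁻¹`, `b ↦ ab`, `c_{2i+1} ↦ c_{2i+1}`,
`c_{2i+2} ↦ a²c_{2i+1}c_{2i+2}` for `0 ≤ i ≤ ⌊(m-5)/2⌋` (equivalently `2i + 5 ≤ m`),
and additionally `c_{m-3} ↦ a²c_{m-3}` if `m` is even, extends to an automorphism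
of `H` of order 2. -/
theorem dihedral_times_elementary_abelian_aut_x (m : ℕ) (hm : 4 ≤ m) :
    ∃ x : MulAut (Hgrp m),
      orderOf x = 2 ∧
      x (aElt m) = (aElt m)⁻¹ ∧
      x (bElt m) = aElt m * bElt m ∧
      (∀ i : ℕ, 2 * i + 5 ≤ m →
        x (cElt m (2 * i + 1)) = cElt m (2 * i + 1) ∧
        x (cElt m (2 * i + 2)) = (aElt m) ^ 2 * cElt m (2 * i + 1) * cElt m (2 * i + 2)) ∧
      (Even m → x (cElt m (m - 3)) = (aElt m) ^ 2 * cElt m (m - 3)) := by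
  refine ⟨xAut m, ?_, ?_, ?_, ?_, ?_⟩
  · have hsq : xAut m ^ 2 = 1 := by
      refine DFunLike.ext _ _ fun z => ?_
      show xAut m (xAut m z) = z
      exact xInvol m z
    have hne : xAut m ≠ 1 := by
      intro h
      have h2 := DFunLike.congr_fun h (aElt m)
      rw [MulAut.one_apply, xAut_apply] at h2
      have h3 := congrArg Prod.fst h2
      simp only [xFun, aElt, toAdd_one', twist_zero, mul_one] at h3
      exact absurd h3 (by decide)
    exact orderOf_eq_prime hsq hne
  · rw [xAut_apply]
    show (psi (DihedralGroup.r 1) * twist (m - 3) 0,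
        Multiplicative.ofAdd (Tm (m - 3) 0)) = _
    rw [twist_zero, mul_one, Tm_zero]
    unfold aElt
    rw [Prod.inv_mk, inv_one]
    refine Prod.ext ?_ rfl
    show psi (DihedralGroup.r 1) = (DihedralGroup.r 1)⁻¹
    decide
  · rw [xAut_apply]
    show (psi (DihedralGroup.sr 0) * twist (m - 3) 0,
        Multiplicative.ofAdd (Tm (m - 3) 0)) = _
    rw [twist_zero, mul_one, Tm_zero]
    unfold aElt bElt
    rw [Prod.mk_mul_mk, mul_one]
    refine Prod.ext ?_ rfl
    show psi (DihedralGroup.sr 0) = DihedralGroup.r 1 * DihedralGroup.sr 0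
    decide
  · intro i hi
    constructor
    · rw [x_c m (2 * i + 1) (by omega) (by omega)]
      have hmu : mu (m - 3) (2 * i + 1 - 1) = 0 := by
        unfold mu
        rw [if_neg (by omega)]
      rw [hmu, Tm_c_odd _ _ (by omega)]
      unfold cElt
      refine Prod.ext ?_ rfl
      show DihedralGroup.r ((2 * ZMod.val (0 : ZMod 2) : ℕ) : ZMod 4) = 1
      decide
    · rw [x_c m (2 * i + 2) (by omega) (by omega)]
      have hmu : mu (m - 3) (2 * i + 2 - 1) = 1 := by
        unfold mu
        rw [if_pos (by omega)]
      rw [hmu, Tm_c_even _ _ (by omega) (by omega) (by omega),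
        show 2 * i + 2 - 1 = 2 * i + 1 by omega]
      unfold cElt aElt
      refine Prod.ext ?_ ?_
      · simp only [Prod.fst_mul, Prod.pow_fst]
        show DihedralGroup.r ((2 * ZMod.val (1 : ZMod 2) : ℕ) : ZMod 4)
            = DihedralGroup.r 1 ^ 2 * 1 * 1
        decide
      · simp only [Prod.snd_mul, Prod.pow_snd, one_pow, one_mul]
        exact (ofAdd_add _ _)
  · intro hmeven
    obtain ⟨t, ht⟩ := hmeven
    rw [x_c m (m - 3) (by omega) le_rfl]
    have hmu : mu (m - 3) (m - 3 - 1) = 1 := by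
      unfold mu
      rw [if_pos (by omega)]
    rw [hmu, Tm_c_odd _ _ (by omega)]
    unfold cElt aElt
    refine Prod.ext ?_ ?_
    · simp only [Prod.fst_mul, Prod.pow_fst]
      show DihedralGroup.r ((2 * ZMod.val (1 : ZMod 2) : ℕ) : ZMod 4)
          = DihedralGroup.r 1 ^ 2 * 1
      decide
    · simp only [Prod.snd_mul, Prod.pow_snd, one_pow, one_mul]
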